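/- 2G − π·log 2/4 = 2·Im Li₂((1/√2)·e^{3πi/4}) + Im Li₂((1/2)·e^{πi/2}), where G is Catalan's constant. -/

import Mathlib

open Complex Metric

noncomputable def Li (s : ℕ) (z : ℂ) : ℂ := ∑' k : ℕ, z ^ (k + 1) / ((k : ℂ) + 1) ^ s

noncomputable def LiR (s : ℕ) (x : ℝ) : ℝ := ∑' k : ℕ, x ^ (k + 1) / ((k : ℝ) + 1) ^ s

noncomputable def catalanG : ℝ := ∑' k : ℕ, (-1 : ℝ) ^ k / (2 * (k : ℝ) + 1) ^ 2

lemma summable_inv_sq : Summable (fun k : ℕ => 1 / ((k:ℝ)+1)^2) := by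
  have := Real.summable_one_div_nat_pow.mpr (le_refl 2)
  simpa using (summable_nat_add_iff 1).mpr this

lemma Li_summable_norm {z : ℂ} (hz : ‖z‖ ≤ 1) :
    Summable (fun k : ℕ => ‖z ^ (k+1) / ((k:ℂ)+1)^2‖) := by
  refine summable_inv_sq.of_nonneg_of_le (fun k => norm_nonneg _) (fun k => ?_)
  rw [norm_div, norm_pow, norm_pow]
  have h1 : ‖((k:ℂ)+1)‖ = (k:ℝ)+1 := by
    norm_cast
  rw [h1, div_le_div_iff₀ (by positivity) (by positivity)]
  have : ‖z‖^(k+1) ≤ 1 := pow_le_one₀ (norm_nonneg z) hz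
  nlinarith [pow_pos (show (0:ℝ) < (k:ℝ)+1 by positivity) 2]

lemma Li_summable {z : ℂ} (hz : ‖z‖ ≤ 1) :
    Summable (fun k : ℕ => z ^ (k+1) / ((k:ℂ)+1)^2) :=
  (Li_summable_norm hz).of_norm

lemma Li_hasSum {z : ℂ} (hz : ‖z‖ ≤ 1) :
    HasSum (fun k : ℕ => z ^ (k+1) / ((k:ℂ)+1)^2) (Li 2 z) := by
  simpa [Li] using (Li_summable hz).hasSum

lemma norm_nat_succ (k : ℕ) : ‖((k:ℂ)+1)‖ = (k:ℝ)+1 := by norm_cast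

lemma Li_continuousOn : ContinuousOn (Li 2) (closedBall (0:ℂ) 1) := by
  refine continuousOn_tsum (fun k => ?_) summable_inv_sq (fun k z hz => ?_)
  · fun_prop
  · rw [mem_closedBall, dist_zero_right] at hz
    rw [norm_div, norm_pow, norm_pow, norm_nat_succ]
    rw [div_le_div_iff₀ (by positivity) (by positivity)]
    have : ‖z‖^(k+1) ≤ 1 := pow_le_one₀ (norm_nonneg z) hz
    nlinarith [pow_pos (show (0:ℝ) < (k:ℝ)+1 by positivity) 2]

noncomputable def D (z : ℂ) : ℂ := ∑' k : ℕ, z ^ k / ((k:ℂ)+1)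

lemma Li_hasDerivAt {z : ℂ} (hz : ‖z‖ < 1) :
    HasDerivAt (Li 2) (D z) z := by
  show HasDerivAt (Li 2) (∑' k : ℕ, z ^ k / ((k:ℂ)+1)) z
  set r : ℝ := (1 + ‖z‖)/2 with hr
  have hr0 : 0 ≤ r := by positivity
  have hr1 : r < 1 := by simp only [hr]; linarith
  have hzr : ‖z‖ < r := by simp only [hr]; linarith
  have hsum : Summable (fun k : ℕ => r ^ k) := summable_geometric_of_lt_one hr0 hr1
  refine hasDerivAt_tsum_of_isPreconnected hsum isOpen_ball
    (convex_ball (0:ℂ) r).isPreconnected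
    (g := fun (k:ℕ) (y:ℂ) => y ^ (k+1) / ((k:ℂ)+1)^2)
    (g' := fun (k:ℕ) (y:ℂ) => y ^ k / ((k:ℂ)+1))
    (fun k y hy => ?_) (fun k y hy => ?_) (mem_ball_self (lt_of_le_of_lt (norm_nonneg z) hzr))
    ?_ (by simpa using hzr)
  · have h := (hasDerivAt_pow (k+1) y).div_const (((k:ℂ)+1)^2)
    convert h using 1
    · rfl
    have hk : ((k:ℂ)+1) ≠ 0 := Nat.cast_add_one_ne_zero k
    rw [Nat.add_sub_cancel]; push_cast
    field_simp
  · rw [mem_ball, dist_zero_right] at hy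
    rw [norm_div, norm_pow, norm_nat_succ]
    have h1 : ‖y‖^k ≤ r^k := pow_le_pow_left₀ (norm_nonneg y) hy.le k
    have h2 : (1:ℝ) ≤ (k:ℝ)+1 := by have := Nat.cast_nonneg (α := ℝ) k; linarith
    calc ‖y‖^k / ((k:ℝ)+1) ≤ ‖y‖^k / 1 := by gcongr
      _ = ‖y‖^k := div_one _
      _ ≤ r^k := h1
  · have hz0 : (0:ℂ) ∈ ball (0:ℂ) r := mem_ball_self (lt_of_le_of_lt (norm_nonneg z) hzr)
    exact (summable_zero.congr (fun k => by simp)).congr (fun k => rfl)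

lemma D_zero : D 0 = 1 := by
  rw [D, tsum_eq_single 0 (fun k hk => by
    rw [zero_pow hk, zero_div])]
  simp

lemma D_eq {z : ℂ} (hz : ‖z‖ < 1) (h0 : z ≠ 0) : D z = -Complex.log (1-z) / z := by
  have h : HasSum (fun n : ℕ => z^n / (n:ℂ)) (-Complex.log (1-z)) :=
    Complex.hasSum_taylorSeries_neg_log hz
  have h2 : HasSum (fun k : ℕ => z^(k+1) / ((k:ℂ)+1)) (-Complex.log (1-z)) := by
    have h' : HasSum (fun n : ℕ => z^n / (n:ℂ))
        (-Complex.log (1-z) + ∑ i ∈ Finset.range 1, z^i / (i:ℂ)) := by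
      simpa using h
    have := (hasSum_nat_add_iff (f := fun n : ℕ => z^n/(n:ℂ)) 1).mpr h'
    refine this.congr (fun k => ?_)
    push_cast
    ring
  have hfun : (fun k : ℕ => z⁻¹ * (z^(k+1)/((k:ℂ)+1))) = fun k : ℕ => z^k / ((k:ℂ)+1) := by
    funext k
    rw [pow_succ']
    field_simp
  have h3 := h2.mul_left z⁻¹
  rw [hfun] at h3
  rw [D, h3.tsum_eq]
  field_simp

lemma Li_zero : Li 2 0 = 0 := by
  simp [Li]

noncomputable def gpath (t : ℝ) : ℂ :=
  Li 2 ((t:ℂ)*I) + Li 2 (-((t:ℂ)*I)/(1-(t:ℂ)*I)) + (1/2) * (Complex.log (1-(t:ℂ)*I))^2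

lemma one_sub_ne (t : ℝ) : (1:ℂ) - (t:ℂ)*I ≠ 0 := by
  intro h
  have := congrArg Complex.re h
  simp at this

lemma one_sub_mem (t : ℝ) : (1:ℂ) - (t:ℂ)*I ∈ slitPlane := by
  rw [mem_slitPlane_iff]
  left; simp

lemma arg_ne (t : ℝ) : ((1:ℂ) - (t:ℂ)*I).arg ≠ Real.pi := by
  rw [ne_eq, Complex.arg_eq_pi_iff]
  simp

lemma norm_tI (t : ℝ) : ‖(t:ℂ)*I‖ = |t| := by
  rw [norm_mul, Complex.norm_I, mul_one, Complex.norm_real, Real.norm_eq_abs]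

lemma normsq_one_sub (t : ℝ) : ‖(1:ℂ) - (t:ℂ)*I‖^2 = 1 + t^2 := by
  rw [Complex.sq_norm, Complex.normSq_apply]
  simp
  ring

lemma norm_w_le (t : ℝ) : ‖-((t:ℂ)*I)/(1-(t:ℂ)*I)‖ ≤ |t| := by
  rw [norm_div, norm_neg, norm_tI]
  refine div_le_self (abs_nonneg t) ?_
  nlinarith [normsq_one_sub t, norm_nonneg ((1:ℂ) - (t:ℂ)*I)]

set_option maxHeartbeats 1000000 in
lemma norm_w_lt (t : ℝ) (ht : |t| ≤ 1) : ‖-((t:ℂ)*I)/(1-(t:ℂ)*I)‖ < 1 := by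
  rcases eq_or_ne t 0 with rfl | h0
  · simp
  · have h1 : ‖-((t:ℂ)*I)‖ < ‖(1:ℂ) - (t:ℂ)*I‖ := by
      rw [norm_neg, norm_tI]
      nlinarith [normsq_one_sub t, norm_nonneg ((1:ℂ) - (t:ℂ)*I), abs_nonneg t, _root_.sq_abs t, abs_pos.mpr h0]
    rw [norm_div, div_lt_one (lt_of_le_of_lt (norm_nonneg _) h1)]
    exact h1

set_option maxHeartbeats 1000000 in
lemma gderiv {t : ℝ} (ht : 0 ≤ t) (ht1 : t < 1) : HasDerivAt gpath 0 t := by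
  set z : ℂ := (t:ℂ)*I with hzdef
  have hz1 : ‖z‖ < 1 := by rw [norm_tI, _root_.abs_of_nonneg ht]; exact ht1
  have hne : (1:ℂ) - z ≠ 0 := one_sub_ne t
  have hw1 : ‖-z/(1-z)‖ < 1 := norm_w_lt t (by rw [_root_.abs_of_nonneg ht]; linarith)
  have hmul : HasDerivAt (fun u : ℂ => u*I) I ((t:ℂ)) := by
    simpa using (hasDerivAt_id ((t:ℂ))).mul_const I
  have hA := (Li_hasDerivAt hz1).comp ((t:ℂ)) hmul
  have hphi := ((hasDerivAt_id z).neg).div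
      ((hasDerivAt_const z (1:ℂ)).sub (hasDerivAt_id z)) hne
  have hB := (((Li_hasDerivAt hw1).comp z hphi)).comp ((t:ℂ)) hmul
  have hlog : HasDerivAt (fun y : ℂ => Complex.log (1-y)) (((1:ℂ)-z)⁻¹ * (0-1)) z :=
    (Complex.hasDerivAt_log (one_sub_mem t)).comp z
      ((hasDerivAt_const z (1:ℂ)).sub (hasDerivAt_id z))
  have hC := (((hlog.pow 2).const_mul ((1:ℂ)/2))).comp ((t:ℂ)) hmul
  have htot := ((hA.add hB).add hC).comp_ofReal
  convert htot using 1
  · rfl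
  simp only [Pi.neg_apply, Pi.sub_apply, id_eq]
  rcases eq_or_ne t 0 with rfl | ht0
  · simp only [hzdef]
    push_cast
    simp [D_zero]
  · have hz0 : z ≠ 0 := by
      simp only [hzdef]
      intro h
      rw [mul_eq_zero] at h
      rcases h with h | h
      · exact ht0 (by exact_mod_cast h)
      · exact I_ne_zero h
    have hw0 : -z/(1-z) ≠ 0 := by
      simp only [ne_eq, div_eq_zero_iff, neg_eq_zero]
      push_neg
      exact ⟨hz0, hne⟩
    have h1w : (1:ℂ) - (-z/(1-z)) = ((1:ℂ)-z)⁻¹ := by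
      field_simp
      ring
    have hlogw : Complex.log (1 - (-z/(1-z))) = -Complex.log (1-z) := by
      rw [h1w, Complex.log_inv _ (arg_ne t)]
    rw [D_eq hz1 hz0, D_eq hw1 hw0, hlogw]
    field_simp
    ring

lemma gpath_continuousOn : ContinuousOn gpath (Set.Icc (0:ℝ) 1) := by
  have hc1 : Continuous (fun t : ℝ => (t:ℂ)*I) := by fun_prop
  have hc2 : Continuous (fun t : ℝ => -((t:ℂ)*I)/(1-(t:ℂ)*I)) := by
    exact (hc1.neg).div (continuous_const.sub hc1) (fun t => one_sub_ne t)
  refine ContinuousOn.add (ContinuousOn.add ?_ ?_) ?_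
  · refine Li_continuousOn.comp hc1.continuousOn (fun t htm => ?_)
    rw [mem_closedBall, dist_zero_right, norm_tI]
    rw [Set.mem_Icc] at htm
    rw [_root_.abs_of_nonneg htm.1]
    exact htm.2
  · refine Li_continuousOn.comp hc2.continuousOn (fun t htm => ?_)
    rw [mem_closedBall, dist_zero_right]
    refine (norm_w_le t).trans ?_
    rw [Set.mem_Icc] at htm
    rw [_root_.abs_of_nonneg htm.1]
    exact htm.2
  · refine ContinuousOn.mul continuousOn_const ?_
    refine (ContinuousOn.pow ?_ 2)
    intro t _
    exact (ContinuousAt.comp (x := t) (g := Complex.log)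
      (continuousAt_clog (one_sub_mem t))
      ((continuous_const.sub hc1).continuousAt)).continuousWithinAt

lemma landen : Li 2 I + Li 2 ((1-I)/2) + (1/2) * (Complex.log (1-I))^2 = 0 := by
  have hkey := constant_of_has_deriv_right_zero gpath_continuousOn
    (fun x hx => (gderiv hx.1 hx.2).hasDerivWithinAt) 1 (by norm_num)
  have h0 : gpath 0 = 0 := by
    simp [gpath, Li_zero]
  have h1 : gpath 1 = Li 2 I + Li 2 ((1-I)/2) + (1/2) * (Complex.log (1-I))^2 := by
    have hne : (1:ℂ) - 1*I ≠ 0 := by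
      intro h
      have := congrArg Complex.re h
      simp at this
    have hw : -((1:ℂ)*I)/(1-(1:ℂ)*I) = (1-I)/2 := by
      rw [div_eq_div_iff hne (by norm_num)]
      ring_nf
      rw [Complex.I_sq]
      ring
    simp only [gpath]
    push_cast
    rw [hw]
    norm_num
  rw [← h1, hkey, h0]

lemma Li_conj (z : ℂ) : Li 2 ((starRingEnd ℂ) z) = (starRingEnd ℂ) (Li 2 z) := by
  rw [Li, Li]
  have hmap := Complex.conjCLE.map_tsum (L := SummationFilter.unconditional ℕ) (f := fun k : ℕ => z ^ (k+1) / ((k:ℂ)+1)^2)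
  simp only [Complex.conjCLE_apply] at hmap
  rw [hmap]
  congr 1
  funext k
  rw [map_div₀, map_pow, map_pow, map_add, map_one, Complex.conj_natCast]

lemma Li_dup {z : ℂ} (hz : ‖z‖ < 1) : Li 2 z + Li 2 (-z) = (1/2) * Li 2 (z^2) := by
  have h1 := Li_hasSum hz.le
  have h2 := Li_hasSum (z := -z) (by rw [norm_neg]; exact hz.le)
  have hadd := h1.add h2
  have hinj : Function.Injective (fun m : ℕ => 2*m+1) := by
    intro a b h; dsimp only at h; omega
  have hvan : ∀ k ∉ Set.range (fun m : ℕ => 2*m+1),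
      z ^ (k+1) / ((k:ℂ)+1)^2 + (-z) ^ (k+1) / ((k:ℂ)+1)^2 = 0 := by
    intro k hk
    have hke : Even k := by
      by_contra hcon
      rw [Nat.not_even_iff_odd] at hcon
      obtain ⟨m, hm⟩ := hcon
      exact hk ⟨m, by dsimp only; omega⟩
    have hodd : Odd (k+1) := hke.add_one
    rw [hodd.neg_pow]
    ring
  have hodd := (Function.Injective.hasSum_iff hinj hvan).mpr hadd
  have hfun : ((fun k : ℕ => z ^ (k+1) / ((k:ℂ)+1)^2 + (-z) ^ (k+1) / ((k:ℂ)+1)^2)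
        ∘ (fun m : ℕ => 2*m+1))
      = fun m : ℕ => (1/2 : ℂ) * ((z^2) ^ (m+1) / ((m:ℂ)+1)^2) := by
    funext m
    simp only [Function.comp]
    have hm : ((m:ℂ)+1) ≠ 0 := Nat.cast_add_one_ne_zero m
    have h1 : (2*m+1) + 1 = 2*(m+1) := by ring
    have hc : ((2*m+1 : ℕ):ℂ) + 1 = 2*((m:ℂ)+1) := by push_cast; ring
    rw [h1, pow_mul, pow_mul, neg_sq, hc]
    field_simp
    ring
  rw [hfun] at hodd
  have h3 := (Li_hasSum (z := z^2) (by rw [norm_pow]; nlinarith [norm_nonneg z])).mul_left (1/2 : ℂ)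
  exact hodd.unique h3

lemma catalan_hasSum : HasSum (fun m : ℕ => (-1:ℝ)^m / (2*(m:ℝ)+1)^2) catalanG := by
  refine Summable.hasSum ?_
  refine Summable.of_norm ?_
  refine summable_inv_sq.of_nonneg_of_le (fun m => norm_nonneg _) (fun m => ?_)
  rw [norm_div, norm_pow, norm_neg, norm_one, one_pow, norm_pow]
  rw [Real.norm_eq_abs, abs_of_pos (by positivity : (0:ℝ) < 2*(m:ℝ)+1)]
  have hm := Nat.cast_nonneg (α := ℝ) m
  rw [div_le_div_iff₀ (by positivity) (by positivity)]
  nlinarith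

lemma Li_I_im : (Li 2 I).im = catalanG := by
  have h := Li_hasSum (z := I) (by simp)
  have him := ((Complex.hasSum_iff _ _).mp h).2
  have hinj : Function.Injective (fun m : ℕ => 2*m) := by
    intro a b h; dsimp only at h; omega
  have hvan : ∀ k ∉ Set.range (fun m : ℕ => 2*m), (I^(k+1)/((k:ℂ)+1)^2).im = 0 := by
    intro k hk
    have ho : Odd k := by
      by_contra hcon
      rw [Nat.not_odd_iff_even] at hcon
      obtain ⟨m, hm⟩ := hcon
      exact hk ⟨m, by dsimp only; omega⟩
    obtain ⟨m, rfl⟩ := ho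
    have hI : I^(2*m+1+1) = (((-1:ℝ)^(m+1) : ℝ) : ℂ) := by
      rw [show 2*m+1+1 = 2*(m+1) by ring, pow_mul, I_sq]
      push_cast
      ring
    have hc : ((2*m+1 : ℕ):ℂ) + 1 = ((2*(m:ℝ)+2 : ℝ) : ℂ) := by push_cast; ring
    rw [hI, hc, ← Complex.ofReal_pow, ← Complex.ofReal_div]
    exact Complex.ofReal_im _
  have hodd := (Function.Injective.hasSum_iff hinj hvan).mpr him
  have hfun : ((fun k : ℕ => (I^(k+1)/((k:ℂ)+1)^2).im) ∘ (fun m : ℕ => 2*m))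
      = fun m : ℕ => (-1:ℝ)^m / (2*(m:ℝ)+1)^2 := by
    funext m
    simp only [Function.comp]
    have hI : I^(2*m+1) = (((-1:ℝ)^m : ℝ) : ℂ) * I := by
      rw [pow_succ, pow_mul, I_sq]
      push_cast
      ring
    have hc : ((2*m : ℕ):ℂ) + 1 = ((2*(m:ℝ)+1 : ℝ) : ℂ) := by push_cast; ring
    rw [hI, hc, ← Complex.ofReal_pow]
    rw [show ((((-1:ℝ)^m : ℝ)) : ℂ) * I / (((2*(m:ℝ)+1)^2 : ℝ) : ℂ)
      = (((((-1:ℝ)^m / (2*(m:ℝ)+1)^2) : ℝ)) : ℂ) * I by push_cast; ring]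
    rw [Complex.mul_I_im, Complex.ofReal_re]
  rw [hfun] at hodd
  exact hodd.unique catalan_hasSum

lemma log_one_sub_I :
    Complex.log (1 - I) = ((Real.log 2 / 2 : ℝ) : ℂ) + ((-(Real.pi/4) : ℝ) : ℂ) * I := by
  have h2 : Real.sqrt 2 * Real.sqrt 2 = 2 := Real.mul_self_sqrt (by norm_num)
  have h : (1:ℂ) - I = ((Real.sqrt 2 : ℝ) : ℂ) * Complex.exp (((-(Real.pi/4) : ℝ) : ℂ) * I) := by
    rw [Complex.exp_mul_I, ← Complex.ofReal_cos, ← Complex.ofReal_sin,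
      Real.cos_neg, Real.sin_neg, Real.cos_pi_div_four, Real.sin_pi_div_four]
    apply Complex.ext <;> simp <;> nlinarith
  rw [h, Complex.log_ofReal_mul (Real.sqrt_pos.mpr (by norm_num)) (Complex.exp_ne_zero _),
    Complex.log_exp (by simp; linarith [Real.pi_pos]) (by simp; linarith [Real.pi_pos])]
  rw [Real.log_sqrt (by norm_num)]

lemma arg_eval1 :
    ((1 / Real.sqrt 2 : ℝ) : ℂ) * Complex.exp ((3 * (Real.pi:ℂ) / 4) * Complex.I) = (-1+I)/2 := by
  have h2 : Real.sqrt 2 * Real.sqrt 2 = 2 := Real.mul_self_sqrt (by norm_num)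
  have h0 : Real.sqrt 2 ≠ 0 := by positivity
  have harg : (3 * (Real.pi:ℂ) / 4) = ((3 * Real.pi / 4 : ℝ) : ℂ) := by push_cast; ring
  rw [harg, Complex.exp_mul_I, ← Complex.ofReal_cos, ← Complex.ofReal_sin]
  have hc : Real.cos (3 * Real.pi / 4) = -(Real.sqrt 2 / 2) := by
    rw [show 3 * Real.pi / 4 = Real.pi - Real.pi/4 by ring, Real.cos_pi_sub, Real.cos_pi_div_four]
  have hs : Real.sin (3 * Real.pi / 4) = Real.sqrt 2 / 2 := by
    rw [show 3 * Real.pi / 4 = Real.pi - Real.pi/4 by ring, Real.sin_pi_sub, Real.sin_pi_div_four]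
  rw [hc, hs]
  apply Complex.ext <;> simp <;> field_simp <;> nlinarith

lemma arg_eval2 :
    ((1/2 : ℝ) : ℂ) * Complex.exp (((Real.pi:ℂ) / 2) * Complex.I) = I/2 := by
  have harg : ((Real.pi:ℂ) / 2) = ((Real.pi / 2 : ℝ) : ℂ) := by push_cast; ring
  rw [harg, Complex.exp_mul_I, ← Complex.ofReal_cos, ← Complex.ofReal_sin,
    Real.cos_pi_div_two, Real.sin_pi_div_two]
  apply Complex.ext <;> simp

theorem stmt10 : 2 * catalanG - Real.pi * Real.log 2 / 4 = 2 * (Li 2 (((1 / Real.sqrt 2 : ℝ) : ℂ) * Complex.exp ((3 * Real.pi / 4) * Complex.I))).im + (Li 2 (((1/2 : ℝ) : ℂ) * Complex.exp ((Real.pi / 2) * Complex.I))).im := by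
  rw [arg_eval1, arg_eval2]
  have h2 : Real.sqrt 2 * Real.sqrt 2 = 2 := Real.mul_self_sqrt (by norm_num)
  have hwn : ‖((1+I)/2 : ℂ)‖ < 1 := by
    rw [norm_div]
    rw [show ‖(2:ℂ)‖ = 2 by norm_num]
    rw [div_lt_one (by norm_num)]
    have : ‖(1+I : ℂ)‖^2 = 2 := by
      rw [Complex.sq_norm, Complex.normSq_apply]
      norm_num
    nlinarith [norm_nonneg (1+I : ℂ)]
  have hdup := Li_dup hwn
  have hsq : ((1+I)/2 : ℂ)^2 = I/2 := by
    linear_combination (1/4 : ℂ) * Complex.I_sq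
  rw [hsq] at hdup
  -- conjugation facts
  have hconjw : ((1-I)/2 : ℂ) = (starRingEnd ℂ) ((1+I)/2) := by
    rw [map_div₀, map_add, map_one, Complex.conj_I, map_ofNat]
    ring
  have hconjB : ((-1+I)/2 : ℂ) = (starRingEnd ℂ) (-((1+I)/2)) := by
    rw [map_neg, ← hconjw]
    ring
  have h1 : (Li 2 ((1-I)/2)).im = -(Li 2 ((1+I)/2)).im := by
    rw [hconjw, Li_conj, Complex.conj_im]
  have hB : (Li 2 ((-1+I)/2)).im = -(Li 2 (-((1+I)/2))).im := by
    rw [hconjB, Li_conj, Complex.conj_im]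
  -- imaginary part of landen
  have hlan := congrArg Complex.im landen
  rw [Complex.add_im, Complex.add_im, log_one_sub_I] at hlan
  have hlogim : ((1/2 : ℂ) * (((Real.log 2 / 2 : ℝ) : ℂ) + ((-(Real.pi/4) : ℝ) : ℂ) * I)^2).im
      = (Real.log 2 / 2) * (-(Real.pi/4)) := by
    have : ((1/2 : ℂ) * (((Real.log 2 / 2 : ℝ) : ℂ) + ((-(Real.pi/4) : ℝ) : ℂ) * I)^2)
        = ((((Real.log 2 / 2)^2 - (Real.pi/4)^2)/2 : ℝ) : ℂ)
          + (((Real.log 2 / 2) * (-(Real.pi/4)) : ℝ) : ℂ) * I := by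
      have hI := Complex.I_sq
      push_cast
      linear_combination ((-(Real.pi/4) : ℂ)^2/2) * hI
    rw [this, Complex.add_im, Complex.ofReal_im, Complex.mul_I_im, Complex.ofReal_re, zero_add]
  rw [hlogim, Li_I_im] at hlan
  -- imaginary part of duplication
  have hdupim := congrArg Complex.im hdup
  rw [Complex.add_im] at hdupim
  have hhalf : ((1/2 : ℂ) * Li 2 (I/2)).im = (1/2) * (Li 2 (I/2)).im := by
    rw [Complex.mul_im]
    norm_num
  rw [hhalf] at hdupim
  rw [hB]
  rw [Complex.zero_im] at hlan
  linarith
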